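/- Let G be a connected simple graph on n ≥ 2 vertices with characteristic polynomial f (of its adjacency matrix, regarded as a complex polynomial), let 0 < p < 2 be a real number, and let g(z) = z^n − (n−1)z^{n−2} be the characteristic polynomial of the star S_n. Then the integral I = ∫₀^∞ z^{p−1} · log| f(iz) / (z^{n−2}(z² + n − 1)) | dz is nonnegative: I ≥ 0. -/

import Mathlib

open Finset MeasureTheory

/-- The eigenvalues of the (real) adjacency matrix of a simple graph on `Fin n`. -/
noncomputable def adjEigenvalues {n : ℕ} (G : SimpleGraph (Fin n)) [DecidableRel G.Adj] :
    Fin n → ℝ :=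
  Matrix.IsHermitian.eigenvalues
    ((Matrix.conjTranspose_eq_transpose_of_trivial (G.adjMatrix ℝ)).trans G.isSymm_adjMatrix)

/-- The `p`-energy of a graph: the sum of the `p`-th powers of the absolute values of the
adjacency eigenvalues. -/
noncomputable def pEnergy {n : ℕ} (G : SimpleGraph (Fin n)) [DecidableRel G.Adj] (p : ℝ) : ℝ :=
  ∑ i, |adjEigenvalues G i| ^ p

/-- The star graph on `Fin n`: vertex `0` is adjacent to all other vertices. -/
def starGraph (n : ℕ) : SimpleGraph (Fin n) where
  Adj u v := ((u : ℕ) = 0 ∨ (v : ℕ) = 0) ∧ u ≠ v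
  symm := ⟨fun _ _ h => ⟨h.1.symm, h.2.symm⟩⟩
  loopless := ⟨fun _ h => h.2 rfl⟩

instance (n : ℕ) : DecidableRel (starGraph n).Adj :=
  fun u v => inferInstanceAs (Decidable (((u : ℕ) = 0 ∨ (v : ℕ) = 0) ∧ u ≠ v))

namespace StarMinAux

open SimpleGraph Matrix Polynomial

/-! ### Elementary inequalities -/

lemma prod_one_add_ge {k : ℕ} (u : Fin k → ℝ) (hu : ∀ j, 0 ≤ u j) (s : Finset (Fin k)) :
    1 + ∑ j ∈ s, u j + ((∑ j ∈ s, u j)^2 - ∑ j ∈ s, (u j)^2)/2 ≤ ∏ j ∈ s, (1 + u j) := by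
  induction s using Finset.induction_on with
  | empty => simp
  | @insert a s ha ih =>
    rw [Finset.prod_insert ha, Finset.sum_insert ha, Finset.sum_insert ha]
    have hS : 0 ≤ ∑ j ∈ s, u j := Finset.sum_nonneg fun j _ => hu j
    have hE : 0 ≤ ((∑ j ∈ s, u j)^2 - ∑ j ∈ s, (u j)^2)/2 := by
      have := Finset.sum_sq_le_sq_sum_of_nonneg (f := u) (s := s) (fun j _ => hu j)
      linarith
    have ha0 := hu a
    nlinarith [mul_nonneg ha0 hE, mul_nonneg ha0 hS]

lemma prod_bound {k : ℕ} (t : Fin k → ℝ) (z s : ℝ) (hz : 0 < z) (hs : 1 ≤ s)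
    (ht : ∀ j, 0 ≤ t j) (hT : 2*s ≤ ∑ j, t j) (htop : ∀ j, t j ≤ ∑ j, t j - s)
    (hk : 2 ≤ k) :
    (z^(k-2) * (z^2 + s))^2 ≤ ∏ j, (z^2 + t j) := by
  set a : ℝ := z^2 with ha
  have ha0 : 0 < a := by positivity
  set T : ℝ := ∑ j, t j with hTdef
  have hT0 : 0 ≤ T := Finset.sum_nonneg fun j _ => ht j
  have hsq : ∑ j, (t j)^2 ≤ (T - s) * T := by
    calc ∑ j, (t j)^2 ≤ ∑ j, (T - s) * t j := by
          apply Finset.sum_le_sum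
          intro j _
          rw [sq]
          exact mul_le_mul_of_nonneg_right (htop j) (ht j)
      _ = (T - s) * T := by rw [← Finset.mul_sum]
  have hE : s^2 ≤ (T^2 - ∑ j, (t j)^2)/2 := by nlinarith
  set u : Fin k → ℝ := fun j => t j / a with hu
  have hu0 : ∀ j, 0 ≤ u j := fun j => div_nonneg (ht j) ha0.le
  have hsum_u : ∑ j, u j = T / a := by rw [hTdef, Finset.sum_div]
  have hsum_u2 : ∑ j, (u j)^2 = (∑ j, (t j)^2) / a^2 := by
    rw [Finset.sum_div]; congr 1; funext j; rw [hu]; ring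
  have key := prod_one_add_ge u hu0 Finset.univ
  have hprod : a^k * ∏ j, (1 + u j) = ∏ j, (z^2 + t j) := by
    rw [show (a^k : ℝ) = ∏ _j : Fin k, a by simp, ← Finset.prod_mul_distrib]
    exact Finset.prod_congr rfl fun j _ => by rw [hu]; field_simp; rw [ha]
  have hak : a^k = a^(k-2) * a^2 := by
    rw [← pow_add]; congr 1; omega
  have hrhs : (z^(k-2) * (z^2 + s))^2 = a^(k-2) * (a + s)^2 := by
    rw [ha, mul_pow, ← pow_mul, Nat.mul_comm, pow_mul]
  rw [← hprod, hrhs]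
  have h1 : a^(k-2) * (a + s)^2 ≤ a^k * (1 + T/a + s^2/a^2) := by
    rw [hak]
    have expand : a^(k-2) * a^2 * (1 + T/a + s^2/a^2) = a^(k-2) * (a^2 + T*a + s^2) := by
      field_simp
    rw [expand]
    apply mul_le_mul_of_nonneg_left _ (by positivity)
    nlinarith
  refine h1.trans ?_
  apply mul_le_mul_of_nonneg_left _ (by positivity)
  refine le_trans ?_ key
  rw [hsum_u, hsum_u2]
  have : (T/a)^2 = T^2/a^2 := by ring
  rw [this]
  have h2 : s^2/a^2 ≤ ((T^2 - ∑ j, (t j)^2)/2)/a^2 :=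
    div_le_div_of_nonneg_right hE (by positivity)
  have h3 : ((T^2 - ∑ j, (t j)^2)/2)/a^2 = (T^2/a^2 - (∑ j, (t j)^2)/a^2)/2 := by ring
  linarith

/-! ### Graph combinatorics -/

variable {n : ℕ} (G : SimpleGraph (Fin n)) [DecidableRel G.Adj]

lemma degree_pos' (hG : G.Connected) (hn : 2 ≤ n) (v : Fin n) : 0 < G.degree v := by
  rw [G.degree_pos_iff_exists_adj]
  have : ∃ w : Fin n, w ≠ v := by
    have h1 : 1 < Fintype.card (Fin n) := by simpa using (show 1 < n by omega)
    exact Fintype.exists_ne_of_one_lt_card h1 v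
  obtain ⟨w, hw⟩ := this
  obtain ⟨p⟩ := hG.preconnected v w
  have hnil : ¬ p.Nil := SimpleGraph.Walk.not_nil_of_ne (fun h => hw h.symm)
  exact ⟨p.snd, p.adj_snd hnil⟩

lemma card_edges' (hG : G.Connected) (hn : 2 ≤ n) : n - 1 ≤ G.edgeFinset.card := by
  classical
  set v₀ : Fin n := ⟨0, by omega⟩
  have hstep : ∀ v : Fin n, v ≠ v₀ → ∃ u : Fin n, G.Adj v u ∧ G.dist u v₀ < G.dist v v₀ := by
    intro v hv
    obtain ⟨p, hlen⟩ := hG.exists_walk_length_eq_dist v v₀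
    have hd : 0 < G.dist v v₀ := hG.pos_dist_of_ne hv
    have hnil : ¬ p.Nil := by
      rw [SimpleGraph.Walk.not_nil_iff_lt_length]; omega
    refine ⟨p.snd, p.adj_snd hnil, ?_⟩
    have htl : p.tail.length + 1 = p.length := SimpleGraph.Walk.length_tail_add_one hnil
    have := SimpleGraph.dist_le p.tail
    omega
  choose f hf1 hf2 using hstep
  have hinj : Set.InjOn (fun v => if h : v = v₀ then s(v₀, v₀) else s(v, f v h))
      (Finset.univ.erase v₀) := by
    intro a ha b hb hab
    simp only [Finset.coe_erase, Set.mem_diff, Set.mem_singleton_iff, Finset.coe_univ,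
      Set.mem_univ, true_and] at ha hb
    simp only [dif_neg ha, dif_neg hb] at hab
    rw [Sym2.eq_iff] at hab
    rcases hab with ⟨h1, _⟩ | ⟨h1, h2⟩
    · exact h1
    · exfalso
      have c1 := hf2 a ha
      have c2 := hf2 b hb
      rw [h2] at c1
      rw [← h1] at c2
      omega
  have hmaps : ∀ v ∈ Finset.univ.erase v₀,
      (fun v => if h : v = v₀ then s(v₀, v₀) else s(v, f v h)) v ∈ G.edgeFinset := by
    intro v hv
    rw [Finset.mem_erase] at hv
    simp only [dif_neg hv.1, SimpleGraph.mem_edgeFinset, SimpleGraph.mem_edgeSet]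
    exact hf1 v hv.1
  have := Finset.card_le_card_of_injOn _ hmaps hinj
  simpa using this

lemma rowsum_bound (hG : G.Connected) (hn : 2 ≤ n) (i : Fin n) :
    ∑ k, (G.adjMatrix ℝ * G.adjMatrix ℝ) i k ≤ (∑ v, (G.degree v : ℝ)) - ((n : ℝ) - 1) := by
  have hrow : ∀ l : Fin n, ∑ k, (G.adjMatrix ℝ) l k = (G.degree l : ℝ) := fun l => by
    simp [SimpleGraph.adjMatrix_apply, SimpleGraph.degree, SimpleGraph.neighborFinset_eq_filter,
      Finset.sum_boole]
  have h1 : ∑ k, (G.adjMatrix ℝ * G.adjMatrix ℝ) i k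
      = ∑ l, (G.adjMatrix ℝ) i l * (G.degree l : ℝ) := by
    simp only [Matrix.mul_apply]
    rw [Finset.sum_comm]
    exact Finset.sum_congr rfl fun l _ => by rw [← Finset.mul_sum, hrow]
  rw [h1]
  have h2 : ∑ l, (G.adjMatrix ℝ) i l * (G.degree l : ℝ)
      = ∑ l ∈ univ.filter (fun l => G.Adj i l), (G.degree l : ℝ) := by
    rw [Finset.sum_filter]
    exact Finset.sum_congr rfl fun l _ => by
      by_cases h : G.Adj i l <;> simp [h]
  rw [h2]
  have hsplit : (∑ v, (G.degree v : ℝ))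
      = ∑ l ∈ univ.filter (fun l => G.Adj i l), (G.degree l : ℝ)
        + ∑ l ∈ univ.filter (fun l => ¬ G.Adj i l), (G.degree l : ℝ) :=
    (Finset.sum_filter_add_sum_filter_not _ _ _).symm
  have hcompl : ((n : ℝ) - 1) ≤ ∑ l ∈ univ.filter (fun l => ¬ G.Adj i l), (G.degree l : ℝ) := by
    have hn1 : (n - 1 : ℕ) ≤ ∑ l ∈ univ.filter (fun l => ¬ G.Adj i l), G.degree l := by
      have hi : i ∈ univ.filter (fun l => ¬ G.Adj i l) := by
        simp [G.irrefl]
      rw [← Finset.add_sum_erase _ _ hi]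
      have hcard : ((univ.filter (fun l => ¬ G.Adj i l)).erase i).card
          = n - 1 - G.degree i := by
        rw [Finset.card_erase_of_mem hi]
        have : (univ.filter (fun l => ¬ G.Adj i l)).card = n - G.degree i := by
          have := Finset.card_filter_add_card_filter_not
            (s := (univ : Finset (Fin n))) (p := fun l => G.Adj i l)
          simp only [Finset.card_univ, Fintype.card_fin] at this
          have hdeg : (univ.filter (fun l => G.Adj i l)).card = G.degree i := by
            simp [SimpleGraph.degree, SimpleGraph.neighborFinset_eq_filter]
          omega
        omega
      have hone : ∀ l ∈ (univ.filter (fun l => ¬ G.Adj i l)).erase i, 1 ≤ G.degree l :=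
        fun l _ => degree_pos' G hG hn l
      have := Finset.card_nsmul_le_sum _ _ 1 hone
      simp only [smul_eq_mul, mul_one] at this
      have hdle : G.degree i ≤ n - 1 := by
        have := G.degree_lt_card_verts i
        simp only [Fintype.card_fin] at this
        omega
      omega
    calc ((n:ℝ) - 1) = ((n - 1 : ℕ) : ℝ) := by
          rw [Nat.cast_sub (by omega)]; norm_num
      _ ≤ _ := by
        rw [← Nat.cast_sum]
        exact_mod_cast Nat.cast_le.mpr hn1
  linarith

/-! ### Spectral facts -/

lemma adjHerm : (G.adjMatrix ℝ).IsHermitian :=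
  (Matrix.conjTranspose_eq_transpose_of_trivial (G.adjMatrix ℝ)).trans G.isSymm_adjMatrix

lemma spec_real :
    G.adjMatrix ℝ = (adjHerm G).eigenvectorUnitary * Matrix.diagonal (adjEigenvalues G)
      * star ((adjHerm G).eigenvectorUnitary : Matrix (Fin n) (Fin n) ℝ) := by
  have h := (adjHerm G).spectral_theorem
  simpa [adjEigenvalues, adjHerm, Function.comp] using h

lemma sum_eig_sq : ∑ j, (adjEigenvalues G j)^2 = ∑ v, (G.degree v : ℝ) := by
  classical
  set U : Matrix (Fin n) (Fin n) ℝ := ((adjHerm G).eigenvectorUnitary : Matrix (Fin n) (Fin n) ℝ)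
  have hU1 : star U * U = 1 := by
    have := ((adjHerm G).eigenvectorUnitary).2
    exact (Matrix.mem_unitaryGroup_iff').mp this
  set D : Matrix (Fin n) (Fin n) ℝ := Matrix.diagonal (adjEigenvalues G)
  have hAA : G.adjMatrix ℝ * G.adjMatrix ℝ = U * (D * D) * star U := by
    rw [spec_real G]
    show (U * D * star U) * (U * D * star U) = _
    rw [Matrix.mul_assoc (U * D) (star U) (U * D * star U),
      ← Matrix.mul_assoc (star U) (U * D) (star U),
      ← Matrix.mul_assoc (star U) U D, hU1, Matrix.one_mul]
    simp only [Matrix.mul_assoc]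
  have htr : Matrix.trace (G.adjMatrix ℝ * G.adjMatrix ℝ) = ∑ j, (adjEigenvalues G j)^2 := by
    rw [hAA, Matrix.trace_mul_cycle, ← Matrix.mul_assoc, hU1, Matrix.one_mul,
      Matrix.diagonal_mul_diagonal, Matrix.trace_diagonal]
    exact Finset.sum_congr rfl fun j _ => (sq _).symm
  rw [← htr]
  rw [Matrix.trace]
  exact Finset.sum_congr rfl fun v _ => by
    simpa using G.adjMatrix_mul_self_apply_self (α := ℝ) v

lemma eig_vec (j : Fin n) :
    ∃ v : Fin n → ℝ, v ≠ 0 ∧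
      (G.adjMatrix ℝ * G.adjMatrix ℝ) *ᵥ v = ((adjEigenvalues G j)^2) • v := by
  refine ⟨⇑((adjHerm G).eigenvectorBasis j), ?_, ?_⟩
  · intro h
    have h1 : ‖(adjHerm G).eigenvectorBasis j‖ = 1 :=
      (adjHerm G).eigenvectorBasis.orthonormal.1 j
    have h0 : ((adjHerm G).eigenvectorBasis j) = 0 := by
      ext i
      exact congrFun h i
    rw [h0, norm_zero] at h1
    norm_num at h1
  · have heq := (adjHerm G).mulVec_eigenvectorBasis j
    rw [← Matrix.mulVec_mulVec, heq, Matrix.mulVec_smul, heq, smul_smul, sq]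
    rfl

lemma perron {B : Matrix (Fin n) (Fin n) ℝ} (hB : ∀ i j, 0 ≤ B i j) {μ : ℝ} {v : Fin n → ℝ}
    (hv : v ≠ 0) (heq : B *ᵥ v = μ • v) (R : ℝ) (hR : ∀ i, ∑ j, B i j ≤ R) :
    μ ≤ R := by
  obtain ⟨k0, hk0⟩ : ∃ k, v k ≠ 0 := by
    by_contra h
    push_neg at h
    exact hv (funext h)
  obtain ⟨i, -, hi⟩ := Finset.exists_max_image (univ : Finset (Fin n)) (fun k => |v k|)
    ⟨k0, Finset.mem_univ k0⟩
  have hvi : 0 < |v i| := lt_of_lt_of_le (abs_pos.mpr hk0) (hi k0 (Finset.mem_univ k0))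
  have hmu : μ * |v i| ≤ R * |v i| := by
    calc μ * |v i| ≤ |μ * v i| := by
          rw [abs_mul]
          exact mul_le_mul_of_nonneg_right (le_abs_self μ) (abs_nonneg _)
      _ = |(B *ᵥ v) i| := by rw [heq]; simp [Pi.smul_apply, smul_eq_mul]
      _ ≤ ∑ j, B i j * |v j| := by
          rw [Matrix.mulVec, dotProduct]
          refine (Finset.abs_sum_le_sum_abs _ _).trans ?_
          exact Finset.sum_le_sum fun j _ => by rw [abs_mul, abs_of_nonneg (hB i j)]
      _ ≤ ∑ j, B i j * |v i| :=
          Finset.sum_le_sum fun j _ =>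
            mul_le_mul_of_nonneg_left (hi j (Finset.mem_univ j)) (hB i j)
      _ = (∑ j, B i j) * |v i| := by rw [Finset.sum_mul]
      _ ≤ R * |v i| := mul_le_mul_of_nonneg_right (hR i) (abs_nonneg _)
  exact le_of_mul_le_mul_right hmu hvi

lemma eig_sq_le (hG : G.Connected) (hn : 2 ≤ n) (j : Fin n) :
    (adjEigenvalues G j)^2 ≤ (∑ v, (G.degree v : ℝ)) - ((n : ℝ) - 1) := by
  obtain ⟨v, hv, heq⟩ := eig_vec G j
  refine perron ?_ hv heq _ (rowsum_bound G hG hn)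
  intro i k
  rw [Matrix.mul_apply]
  apply Finset.sum_nonneg
  intro l _
  by_cases h1 : G.Adj i l <;> by_cases h2 : G.Adj l k <;> simp [h1, h2]

/-! ### Characteristic polynomial over ℂ -/

lemma eval_charpoly' {R} [CommRing R] {k : ℕ} (M : Matrix (Fin k) (Fin k) R) (x : R) :
    M.charpoly.eval x = (Matrix.diagonal (fun _ => x) - M).det := by
  rw [Matrix.charpoly, ← Polynomial.coe_evalRingHom, RingHom.map_det]
  congr 1
  ext i j
  by_cases h : i = j <;>
    simp [h, Matrix.charmatrix_apply, Matrix.diagonal_apply, Matrix.map_apply]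

lemma adjC : G.adjMatrix ℂ = (G.adjMatrix ℝ).map (algebraMap ℝ ℂ) := by
  ext i j
  by_cases h : G.Adj i j <;> simp [h, Matrix.map_apply]

lemma charpoly_eval_eq_prod (x : ℂ) :
    (G.adjMatrix ℂ).charpoly.eval x = ∏ j, (x - (adjEigenvalues G j : ℂ)) := by
  classical
  set φ : Matrix (Fin n) (Fin n) ℝ →+* Matrix (Fin n) (Fin n) ℂ := (algebraMap ℝ ℂ).mapMatrix
  set U : Matrix (Fin n) (Fin n) ℝ := ((adjHerm G).eigenvectorUnitary : Matrix (Fin n) (Fin n) ℝ)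
  have hU2 : U * star U = 1 := (Matrix.mem_unitaryGroup_iff).mp ((adjHerm G).eigenvectorUnitary).2
  set D : Matrix (Fin n) (Fin n) ℝ := Matrix.diagonal (adjEigenvalues G)
  have hAc : G.adjMatrix ℂ = φ U * φ D * φ (star U) := by
    rw [adjC, spec_real G]
    show φ (U * D * star U) = _
    rw [_root_.map_mul, _root_.map_mul]
  have hdiagx : Matrix.diagonal (fun _ : Fin n => x) = x • (1 : Matrix (Fin n) (Fin n) ℂ) := by
    ext i j
    by_cases h : i = j <;> simp [h, Matrix.diagonal_apply, Matrix.one_apply]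
  have hUU : φ U * φ (star U) = 1 := by rw [← _root_.map_mul φ, hU2, _root_.map_one]
  have hconj : Matrix.diagonal (fun _ : Fin n => x) - G.adjMatrix ℂ
      = φ U * (Matrix.diagonal (fun _ : Fin n => x) - φ D) * φ (star U) := by
    rw [Matrix.mul_sub, Matrix.sub_mul, hdiagx, Matrix.mul_smul, Matrix.mul_one,
      Matrix.smul_mul, hUU, hAc]
  rw [eval_charpoly' (G.adjMatrix ℂ) x, hconj, Matrix.det_mul, Matrix.det_mul]
  have hdetU : (φ U).det * (φ (star U)).det = 1 := by
    rw [← Matrix.det_mul, hUU, Matrix.det_one]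
  have hφD : φ D = Matrix.diagonal (fun j => (adjEigenvalues G j : ℂ)) := by
    show D.map (algebraMap ℝ ℂ) = _
    rw [Matrix.diagonal_map (by simp)]
    rfl
  have hdetD : (Matrix.diagonal (fun _ : Fin n => x) - φ D).det
      = ∏ j, (x - (adjEigenvalues G j : ℂ)) := by
    rw [hφD, Matrix.diagonal_sub, Matrix.det_diagonal]
  calc (φ U).det * (Matrix.diagonal (fun _ : Fin n => x) - φ D).det * (φ (star U)).det
      = ((φ U).det * (φ (star U)).det) * (Matrix.diagonal (fun _ : Fin n => x) - φ D).det := by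
        ring
    _ = ∏ j, (x - (adjEigenvalues G j : ℂ)) := by rw [hdetU, hdetD, one_mul]

lemma abs_charpoly_sq (z : ℝ) :
    (‖(G.adjMatrix ℂ).charpoly.eval (Complex.I * z)‖)^2
      = ∏ j, (z^2 + (adjEigenvalues G j)^2) := by
  rw [charpoly_eval_eq_prod, norm_prod]
  rw [← Finset.prod_pow]
  exact Finset.prod_congr rfl fun j _ => by
    rw [Complex.sq_norm, Complex.normSq_apply]
    simp
    ring

end StarMinAux

/-- For a connected graph `G` on `n ≥ 2` vertices with characteristic polynomial `f` and
`0 < p < 2`, the integral `∫₀^∞ z^(p-1) log |f(iz) / (z^(n-2)(z² + n - 1))| dz` is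
nonnegative. -/
theorem integral_log_ratio_nonneg {n : ℕ} (hn : 2 ≤ n) (G : SimpleGraph (Fin n))
    [DecidableRel G.Adj] (hG : G.Connected) (p : ℝ) (hp0 : 0 < p) (hp2 : p < 2) :
    0 ≤ ∫ z in Set.Ioi (0 : ℝ), z ^ (p - 1) *
          Real.log (‖(G.adjMatrix ℂ).charpoly.eval (Complex.I * z)‖ /
            (z ^ (n - 2) * (z ^ 2 + (n : ℝ) - 1))) := by
  open StarMinAux in
  apply MeasureTheory.setIntegral_nonneg measurableSet_Ioi
  intro z hz
  rw [Set.mem_Ioi] at hz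
  apply mul_nonneg (Real.rpow_nonneg hz.le _)
  apply Real.log_nonneg
  -- denominator
  have hs1 : (1 : ℝ) ≤ (n : ℝ) - 1 := by
    have : (2 : ℝ) ≤ (n : ℝ) := by exact_mod_cast hn
    linarith
  have hden : 0 < z ^ (n - 2) * (z ^ 2 + (n : ℝ) - 1) := by
    have h1 : 0 < z ^ (n - 2) := pow_pos hz _
    have h2 : 0 < z ^ 2 + (n : ℝ) - 1 := by nlinarith
    exact mul_pos h1 h2
  rw [le_div_iff₀ hden, one_mul]
  -- key inequality
  set T : ℝ := ∑ v, (G.degree v : ℝ) with hT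
  have hsum : ∑ j, (adjEigenvalues G j)^2 = T := StarMinAux.sum_eig_sq G
  have hm : n - 1 ≤ G.edgeFinset.card := StarMinAux.card_edges' G hG hn
  have hT2 : 2 * ((n : ℝ) - 1) ≤ T := by
    have hdeg : ∑ v, G.degree v = 2 * G.edgeFinset.card :=
      SimpleGraph.sum_degrees_eq_twice_card_edges G
    have : T = 2 * (G.edgeFinset.card : ℝ) := by
      rw [hT, ← Nat.cast_sum]
      exact_mod_cast congrArg (Nat.cast : ℕ → ℝ) hdeg
    rw [this]
    have : ((n : ℝ) - 1) ≤ (G.edgeFinset.card : ℝ) := by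
      have h1 : ((n - 1 : ℕ) : ℝ) ≤ (G.edgeFinset.card : ℝ) := by exact_mod_cast hm
      rw [Nat.cast_sub (by omega)] at h1
      simpa using h1
    linarith
  have htop : ∀ j, (adjEigenvalues G j)^2 ≤ (∑ j, (adjEigenvalues G j)^2) - ((n : ℝ) - 1) := by
    intro j
    rw [hsum]
    exact StarMinAux.eig_sq_le G hG hn j
  have hprod := StarMinAux.prod_bound (fun j => (adjEigenvalues G j)^2) z ((n : ℝ) - 1) hz hs1
    (fun j => sq_nonneg _) (by rw [hsum]; exact hT2) htop hn
  have habs := StarMinAux.abs_charpoly_sq G z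
  -- conclude |f| ≥ denominator
  have hsq : (z ^ (n - 2) * (z ^ 2 + (n : ℝ) - 1))^2
      ≤ (‖(G.adjMatrix ℂ).charpoly.eval (Complex.I * z)‖)^2 := by
    rw [habs]
    have : z ^ 2 + (n : ℝ) - 1 = z ^ 2 + ((n : ℝ) - 1) := by ring
    rw [this]
    exact hprod
  have h := Real.sqrt_le_sqrt hsq
  rwa [Real.sqrt_sq hden.le, Real.sqrt_sq (norm_nonneg _)] at h
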